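/- Fix an integer N ≥ 2, reals θ_0, θ_1, …, θ_N > 0 and S_0, S_1, …, S_N ≥ 0, a convex function C : ℝ → ℝ, and functions Q_1, …, Q_N : ℝ → ℝ; for x ∈ ℝ^N let b(x) := S_0/θ_0 + Σ_{n=1}^N (S_n − x_n)/θ_n and Ψ(x) := C(b(0)) − C(b(x)) + Σ_{n=1}^N Q_n(x_n). Let D := Π_{n=1}^N [0, M_n] with all M_n ≥ 0, and let x* ∈ D maximize Ψ over D. Define Δ(1) := Ψ(x*) − Ψ(x*[N−1:=0]) and Δ(0) := Ψ(x*[N:=0]) − Ψ(x*[N−1:=0][N:=0]), where x[i:=t] denotes x with its i-th coordinate replaced by t. Then Δ(1) ≥ 0 and Δ(0) ≥ Δ(1); consequently the virtual marginal social welfare Δ̄ := (Δ(0) + Δ(1))/2 is nonnegative, and for every v with 0 ≤ v ≤ Δ̄ one has (Δ̄ − v)·v ≤ Δ̄²/4, with equality if and only if v = Δ̄/2. (NBS in Step N−1 of the sequential bargaining: APO N−1 receives half of the virtual marginal social welfare it generates.) -/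

import Mathlib

/-- The MNO's total resource consumption at offloading profile `x`. -/
noncomputable def resourceB {N : ℕ} (θ0 S0 : ℝ) (θ S : Fin N → ℝ)
    (x : Fin N → ℝ) : ℝ :=
  S0 / θ0 + ∑ n, (S n - x n) / θ n

/-- The social welfare of the data-offloading problem. -/
noncomputable def welfare {N : ℕ} (θ0 S0 : ℝ) (θ S : Fin N → ℝ) (C : ℝ → ℝ)
    (Q : Fin N → ℝ → ℝ) (x : Fin N → ℝ) : ℝ :=
  C (resourceB θ0 S0 θ S 0) - C (resourceB θ0 S0 θ S x) + ∑ n, Q n (x n)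

lemma resourceB_update {N : ℕ} (θ0 S0 : ℝ) (θ S : Fin N → ℝ) (hθ : ∀ n, θ n ≠ 0)
    (x : Fin N → ℝ) (i : Fin N) :
    resourceB θ0 S0 θ S (Function.update x i 0) = resourceB θ0 S0 θ S x + x i / θ i := by
  unfold resourceB
  have h : ∑ n, (S n - Function.update x i 0 n) / θ n - ∑ n, (S n - x n) / θ n
      = ∑ n, ((S n - Function.update x i 0 n) / θ n - (S n - x n) / θ n) :=
    (Finset.sum_sub_distrib _ _).symm
  have h2 : ∑ n, ((S n - Function.update x i 0 n) / θ n - (S n - x n) / θ n) = x i / θ i := by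
    rw [Finset.sum_eq_single i]
    · rw [Function.update_self, div_sub_div_same]
      congr 1
      ring
    · intro n _ hn
      rw [Function.update_of_ne hn, sub_self]
    · simp
  linarith [h, h2]

lemma sumQ_update {N : ℕ} (Q : Fin N → ℝ → ℝ) (x : Fin N → ℝ) (i : Fin N) :
    ∑ n, Q n (Function.update x i 0 n) = ∑ n, Q n (x n) - Q i (x i) + Q i 0 := by
  have h : ∑ n, Q n (Function.update x i 0 n) - ∑ n, Q n (x n)
      = ∑ n, (Q n (Function.update x i 0 n) - Q n (x n)) := (Finset.sum_sub_distrib _ _).symm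
  have h2 : ∑ n, (Q n (Function.update x i 0 n) - Q n (x n)) = Q i 0 - Q i (x i) := by
    rw [Finset.sum_eq_single i]
    · rw [Function.update_self]
    · intro n _ hn
      rw [Function.update_of_ne hn, sub_self]
    · simp
  linarith [h, h2]

lemma conv_key {C : ℝ → ℝ} (hC : ConvexOn ℝ Set.univ C) (a p q : ℝ) (hp : 0 ≤ p) (hq : 0 ≤ q) :
    C (a + p) + C (a + q) ≤ C a + C (a + p + q) := by
  rcases eq_or_lt_of_le (by linarith : (0:ℝ) ≤ p + q) with h | h
  · have hp0 : p = 0 := by linarith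
    have hq0 : q = 0 := by linarith
    simp [hp0, hq0]
  · have h1 := hC.2 (Set.mem_univ a) (Set.mem_univ (a + p + q))
      (by positivity : (0:ℝ) ≤ q / (p + q)) (by positivity : (0:ℝ) ≤ p / (p + q))
      (by field_simp; try ring)
    have h2 := hC.2 (Set.mem_univ a) (Set.mem_univ (a + p + q))
      (by positivity : (0:ℝ) ≤ p / (p + q)) (by positivity : (0:ℝ) ≤ q / (p + q))
      (by field_simp; try ring)
    simp only [smul_eq_mul] at h1 h2
    have e1 : q / (p + q) * a + p / (p + q) * (a + p + q) = a + p := by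
      field_simp; ring
    have e2 : p / (p + q) * a + q / (p + q) * (a + p + q) = a + q := by
      field_simp; ring
    rw [e1] at h1
    rw [e2] at h2
    have key : q / (p + q) * C a + p / (p + q) * C (a + p + q)
        + (p / (p + q) * C a + q / (p + q) * C (a + p + q)) = C a + C (a + p + q) := by
      field_simp; ring
    linarith

/-- NBS in Step `N−1` of the sequential bargaining: `Δ(1) ≥ 0`, `Δ(0) ≥ Δ(1)`,
the virtual marginal social welfare `Δ̄ = (Δ(0)+Δ(1))/2` is nonnegative, and the
Nash product `(Δ̄ − v)·v` is at most `Δ̄²/4` with equality iff `v = Δ̄/2`: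
APO `N−1` receives half of the virtual marginal social welfare it generates. -/
theorem NBS_step_N_minus_one {N : ℕ} (hN : 2 ≤ N)
    (θ0 : ℝ) (θ : Fin N → ℝ) (hθ0 : 0 < θ0) (hθ : ∀ n, 0 < θ n)
    (S0 : ℝ) (S : Fin N → ℝ) (hS0 : 0 ≤ S0) (hS : ∀ n, 0 ≤ S n)
    (C : ℝ → ℝ) (hC : ConvexOn ℝ Set.univ C)
    (Q : Fin N → ℝ → ℝ)
    (M : Fin N → ℝ) (hM : ∀ n, 0 ≤ M n)
    (xs : Fin N → ℝ) (hmem : ∀ n, xs n ∈ Set.Icc 0 (M n))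
    (hmax : ∀ y : Fin N → ℝ, (∀ n, y n ∈ Set.Icc 0 (M n)) →
      welfare θ0 S0 θ S C Q y ≤ welfare θ0 S0 θ S C Q xs) :
    let nprev : Fin N := ⟨N - 2, by omega⟩
    let nlast : Fin N := ⟨N - 1, by omega⟩
    let Δ1 := welfare θ0 S0 θ S C Q xs -
      welfare θ0 S0 θ S C Q (Function.update xs nprev 0)
    let Δ0 := welfare θ0 S0 θ S C Q (Function.update xs nlast 0) -
      welfare θ0 S0 θ S C Q (Function.update (Function.update xs nprev 0) nlast 0)
    0 ≤ Δ1 ∧ Δ1 ≤ Δ0 ∧ 0 ≤ (Δ0 + Δ1) / 2 ∧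
    ∀ v : ℝ, 0 ≤ v → v ≤ (Δ0 + Δ1) / 2 →
      (((Δ0 + Δ1) / 2 - v) * v ≤ ((Δ0 + Δ1) / 2) ^ 2 / 4 ∧
       (((Δ0 + Δ1) / 2 - v) * v = ((Δ0 + Δ1) / 2) ^ 2 / 4 ↔
         v = ((Δ0 + Δ1) / 2) / 2)) := by
  intro nprev nlast Δ1 Δ0
  have hne : nlast ≠ nprev := by
    intro h
    have h2 : (N - 1 : ℕ) = N - 2 := congrArg Fin.val h
    omega
  have hθne : ∀ n, θ n ≠ 0 := fun n => (hθ n).ne'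
  have hfeas : ∀ n, Function.update xs nprev 0 n ∈ Set.Icc 0 (M n) := by
    intro n
    rcases eq_or_ne n nprev with h | h
    · rw [h, Function.update_self]; exact ⟨le_refl 0, hM nprev⟩
    · rw [Function.update_of_ne h]; exact hmem n
  have hΔ1 : 0 ≤ Δ1 := sub_nonneg.mpr (hmax _ hfeas)
  set a := resourceB θ0 S0 θ S xs with ha
  set p := xs nprev / θ nprev with hpdef
  set q := xs nlast / θ nlast with hqdef
  have hp : 0 ≤ p := div_nonneg (hmem nprev).1 (hθ nprev).le
  have hq : 0 ≤ q := div_nonneg (hmem nlast).1 (hθ nlast).le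
  have hb1 : resourceB θ0 S0 θ S (Function.update xs nprev 0) = a + p :=
    resourceB_update θ0 S0 θ S hθne xs nprev
  have hb2 : resourceB θ0 S0 θ S (Function.update xs nlast 0) = a + q :=
    resourceB_update θ0 S0 θ S hθne xs nlast
  have hb3 : resourceB θ0 S0 θ S (Function.update (Function.update xs nprev 0) nlast 0)
      = a + p + q := by
    rw [resourceB_update θ0 S0 θ S hθne _ nlast, hb1, Function.update_of_ne hne]
    try ring
  have hQ1 := sumQ_update Q xs nprev
  have hQ2 := sumQ_update Q xs nlast
  have hQ3 := sumQ_update Q (Function.update xs nprev 0) nlast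
  rw [Function.update_of_ne hne, hQ1] at hQ3
  have hd1 : Δ1 = C (a + p) - C a + (Q nprev (xs nprev) - Q nprev 0) := by
    show welfare θ0 S0 θ S C Q xs -
      welfare θ0 S0 θ S C Q (Function.update xs nprev 0) = _
    simp only [welfare, hb1, hQ1, ← ha]
    ring
  have hd0 : Δ0 = C (a + p + q) - C (a + q) + (Q nprev (xs nprev) - Q nprev 0) := by
    show welfare θ0 S0 θ S C Q (Function.update xs nlast 0) -
      welfare θ0 S0 θ S C Q (Function.update (Function.update xs nprev 0) nlast 0) = _
    simp only [welfare, hb2, hb3, hQ2, hQ3, ← ha]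
    ring
  have hΔ01 : Δ1 ≤ Δ0 := by
    have := conv_key hC a p q hp hq
    rw [hd1, hd0]
    linarith
  clear_value Δ0 Δ1
  refine ⟨hΔ1, hΔ01, by linarith, ?_⟩
  intro v hv0 hvm
  constructor
  · nlinarith [sq_nonneg ((Δ0 + Δ1) / 2 - 2 * v)]
  · constructor
    · intro h
      have hsq : ((Δ0 + Δ1) / 2 - 2 * v) ^ 2 = 0 := by nlinarith
      have := sq_eq_zero_iff.mp hsq
      linarith
    · intro h
      rw [h]
      ring
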